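/- arXiv:0710.5800 — 2 statements merged into one kernel-verified Lean document; each statement's English description precedes it below -/
import Mathlib

section
/- Let A be a C*-algebra, I a closed two-sided ideal of A, and M a right Hilbert C*-module over A. Then the closed submodule MI (the closed linear span of elements m·i with m ∈ M, i ∈ I) equals the set of all vectors z ∈ M such that ⟨z, z⟩ ∈ I. -/
/- ## A framework for Hilbert C*-modules over a (possibly non-unital) C*-algebra,
   their adjointable operators, compact operators, Cuntz comparison, ideal
   submodules, quotient modules, direct sums, and standard modules `l₂(I)`. -/

noncomputable section

/-- A (right) Hilbert C*-module over the C*-algebra `A`, bundled with its carrier type.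
The norm is determined by the `A`-valued inner product, and completeness is stated via
Cauchy sequences for that norm. -/
structure HilbertModule (A : Type) [NonUnitalCStarAlgebra A] where
  carrier : Type
  [instAdd : AddCommGroup carrier]
  [instMod : Module ℂ carrier]
  smul : carrier → A → carrier
  inner : carrier → carrier → A
  smul_add : ∀ x y a, smul (x + y) a = smul x a + smul y a
  add_smul' : ∀ x a b, smul x (a + b) = smul x a + smul x b
  smul_mul : ∀ x a b, smul x (a * b) = smul (smul x a) b
  smulC_smul : ∀ (c : ℂ) x a, smul (c • x) a = c • smul x a
  smul_smulC : ∀ (c : ℂ) x a, smul x (c • a) = c • smul x a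
  inner_add_left : ∀ x y z, inner (x + y) z = inner x z + inner y z
  inner_smul_right : ∀ x y a, inner x (smul y a) = inner x y * a
  inner_smulC_right : ∀ (c : ℂ) x y, inner x (c • y) = c • inner x y
  inner_star : ∀ x y, star (inner x y) = inner y x
  inner_self_pos : ∀ x, ∃ b, inner x x = star b * b
  inner_self_definite : ∀ x, inner x x = 0 → x = 0
  complete : ∀ u : ℕ → carrier,
    (∀ ε : ℝ, 0 < ε → ∃ N, ∀ m n, N ≤ m → N ≤ n →
      ‖inner (u m - u n) (u m - u n)‖ < ε) →
    ∃ x, ∀ ε : ℝ, 0 < ε → ∃ N, ∀ n, N ≤ n → ‖inner (u n - x) (u n - x)‖ < ε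

attribute [instance] HilbertModule.instAdd HilbertModule.instMod

namespace HilbertModule

variable {A B : Type} [NonUnitalCStarAlgebra A] [NonUnitalCStarAlgebra B]

/-- The norm on a Hilbert C*-module: `‖x‖ = ‖⟨x,x⟩‖^(1/2)`. -/
def hnorm (M : HilbertModule A) (x : M.carrier) : ℝ := Real.sqrt ‖M.inner x x‖

/-- A (not necessarily closed) submodule of a Hilbert C*-module, as a subset. -/
def IsSubmodule (M : HilbertModule A) (F : Set M.carrier) : Prop :=
  (0 : M.carrier) ∈ F ∧ (∀ x y, x ∈ F → y ∈ F → x + y ∈ F) ∧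
    (∀ x a, x ∈ F → M.smul x a ∈ F) ∧ (∀ (c : ℂ) x, x ∈ F → c • x ∈ F)

/-- `x` belongs to the closure of the subset `S` of the Hilbert module `M`. -/
def MemClosure (M : HilbertModule A) (S : Set M.carrier) (x : M.carrier) : Prop :=
  ∀ ε : ℝ, 0 < ε → ∃ y ∈ S, M.hnorm (x - y) < ε

/-- Closed submodules of a Hilbert C*-module. -/
def IsClosedSubmodule (M : HilbertModule A) (F : Set M.carrier) : Prop :=
  M.IsSubmodule F ∧ ∀ x, M.MemClosure F x → x ∈ F

end HilbertModule

/-- An adjointable operator between Hilbert C*-modules: `⟨T x, y⟩ = ⟨x, T* y⟩`.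
(Such maps are automatically bounded `A`-module maps.) -/
structure Adjointable {A : Type} [NonUnitalCStarAlgebra A]
    (M N : HilbertModule A) where
  toFun : M.carrier → N.carrier
  adjFun : N.carrier → M.carrier
  inner_adj : ∀ x y, N.inner (toFun x) y = M.inner x (adjFun y)

namespace HilbertModule

variable {A B : Type} [NonUnitalCStarAlgebra A] [NonUnitalCStarAlgebra B]

/-- Finite rank operators: finite sums of the operators `θ_{u,v} : x ↦ v⟨u,x⟩`. -/
def IsFiniteRank {M N : HilbertModule A} (T : Adjointable M N) : Prop :=
  ∃ (n : ℕ) (u : Fin n → M.carrier) (v : Fin n → N.carrier),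
    ∀ x, T.toFun x = ∑ i, N.smul (v i) (M.inner (u i) x)

/-- Compact operators: norm limits of finite rank operators. -/
def IsCompactOp {M N : HilbertModule A} (T : Adjointable M N) : Prop :=
  ∀ ε : ℝ, 0 < ε → ∃ S : Adjointable M N, IsFiniteRank S ∧
    ∀ x, N.hnorm (T.toFun x - S.toFun x) ≤ ε * M.hnorm x

/-- Positive operators on a Hilbert C*-module: those of the form `S* S`. -/
def IsPositiveOp {M : HilbertModule A} (T : Adjointable M M) : Prop :=
  ∃ S : Adjointable M M, ∀ x, T.toFun x = S.adjFun (S.toFun x)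

/-- `F ⊂⊂ M`: the closed submodule `F` is compactly contained in `M`, i.e. some
positive compact operator on `M` restricts to the identity on `F`. -/
def CompactlyContained (M : HilbertModule A) (F : Set M.carrier) : Prop :=
  M.IsClosedSubmodule F ∧ ∃ T : Adjointable M M,
    IsCompactOp T ∧ IsPositiveOp T ∧ ∀ x ∈ F, T.toFun x = x

/-- The submodule `F` of `M` is isomorphic, as a Hilbert C*-module, to the
submodule `F'` of `N`. -/
def SubIso (M : HilbertModule A) (F : Set M.carrier)
    (N : HilbertModule A) (F' : Set N.carrier) : Prop :=
  ∃ f : M.carrier → N.carrier, Set.BijOn f F F' ∧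
    (∀ x ∈ F, ∀ y ∈ F, f (x + y) = f x + f y) ∧
    (∀ x ∈ F, ∀ a, f (M.smul x a) = N.smul (f x) a) ∧
    (∀ x ∈ F, ∀ y ∈ F, N.inner (f x) (f y) = M.inner x y)

/-- Cuntz subequivalence of Hilbert C*-modules: every compactly contained submodule
of `M` is isomorphic to a compactly contained submodule of `N`. -/
def CuntzLE (M N : HilbertModule A) : Prop :=
  ∀ F, M.CompactlyContained F → ∃ F', N.CompactlyContained F' ∧ SubIso M F N F'

/-- Cuntz equivalence of Hilbert C*-modules. -/
def CuntzEq (M N : HilbertModule A) : Prop := CuntzLE M N ∧ CuntzLE N M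

/-- A Hilbert C*-module is countably generated if some sequence generates it as a
closed submodule. -/
def CountablyGenerated (M : HilbertModule A) : Prop :=
  ∃ v : ℕ → M.carrier, ∀ F, M.IsClosedSubmodule F → (∀ n, v n ∈ F) → F = Set.univ

/-- A closed two-sided ideal is σ-unital iff it contains a strictly positive element. -/
def SigmaUnital (I : TwoSidedIdeal A) : Prop :=
  ∃ h : A, h ∈ I ∧ (∃ b, h = star b * b) ∧
    ∀ x ∈ I, ∀ ε : ℝ, 0 < ε → ∃ a : A, ‖x - h * a‖ < ε

/-- The ideal submodule `MI = {z ∈ M | ⟨z,z⟩ ∈ I}`. -/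
def idealSet (M : HilbertModule A) (I : TwoSidedIdeal A) : Set M.carrier :=
  {z | M.inner z z ∈ I}

/-- The closed linear span of `{m · i : m ∈ M, i ∈ I}` in `M`. -/
def idealSpanClosure (M : HilbertModule A) (I : TwoSidedIdeal A) : Set M.carrier :=
  {x | M.MemClosure
    (↑(Submodule.span ℂ {z : M.carrier | ∃ m, ∃ a ∈ I, z = M.smul m a})) x}

/-- A Hilbert `A`-module all of whose inner products lie in the ideal `I`; these are
precisely (the `A`-module versions of) the Hilbert C*-modules over `I`. -/
def IsIModule (M : HilbertModule A) (I : TwoSidedIdeal A) : Prop :=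
  ∀ x, M.inner x x ∈ I

end HilbertModule

open HilbertModule

/-- A concrete realization of the ideal submodule `MI` as a Hilbert C*-module in its
own right, via an inner-product preserving embedding onto `{z | ⟨z,z⟩ ∈ I}`. -/
structure IdealRep {A : Type} [NonUnitalCStarAlgebra A]
    (M : HilbertModule A) (I : TwoSidedIdeal A) where
  modl : HilbertModule A
  emb : modl.carrier → M.carrier
  emb_add : ∀ x y, emb (x + y) = emb x + emb y
  emb_smul : ∀ x a, emb (modl.smul x a) = M.smul (emb x) a
  emb_smulC : ∀ (c : ℂ) x, emb (c • x) = c • emb x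
  emb_inner : ∀ x y, M.inner (emb x) (emb y) = modl.inner x y
  emb_range : Set.range emb = idealSet M I

/-- A surjective *-homomorphism `π : A → B` with kernel `I`; this realizes `B` as the
quotient C*-algebra `A/I`. -/
structure QuotientHom (A B : Type) [NonUnitalCStarAlgebra A] [NonUnitalCStarAlgebra B]
    (I : TwoSidedIdeal A) where
  π : A → B
  map_add : ∀ a b, π (a + b) = π a + π b
  map_mul : ∀ a b, π (a * b) = π a * π b
  map_star : ∀ a, π (star a) = star (π a)
  map_smulC : ∀ (c : ℂ) a, π (c • a) = c • π a
  surj : Function.Surjective π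
  ker : ∀ a, π a = 0 ↔ a ∈ I

/-- A realization of the quotient module `M/MI` as a Hilbert C*-module over `B ≅ A/I`. -/
structure QuotientRep {A B : Type} [NonUnitalCStarAlgebra A] [NonUnitalCStarAlgebra B]
    {I : TwoSidedIdeal A} (q : QuotientHom A B I)
    (M : HilbertModule A) where
  modl : HilbertModule B
  p : M.carrier → modl.carrier
  p_surj : Function.Surjective p
  p_add : ∀ x y, p (x + y) = p x + p y
  p_smulC : ∀ (c : ℂ) x, p (c • x) = c • p x
  p_smul : ∀ x a, p (M.smul x a) = modl.smul (p x) (q.π a)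
  p_inner : ∀ x y, modl.inner (p x) (p y) = q.π (M.inner x y)
  p_ker : ∀ x, p x = 0 ↔ M.inner x x ∈ I

/-- A realization of the direct sum `M ⊕ N` of Hilbert C*-modules. -/
structure DirectSumRep {A : Type} [NonUnitalCStarAlgebra A]
    (M N : HilbertModule A) where
  modl : HilbertModule A
  i₁ : M.carrier → modl.carrier
  i₂ : N.carrier → modl.carrier
  p₁ : modl.carrier → M.carrier
  p₂ : modl.carrier → N.carrier
  i₁_add : ∀ x y, i₁ (x + y) = i₁ x + i₁ y
  i₂_add : ∀ x y, i₂ (x + y) = i₂ x + i₂ y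
  i₁_smul : ∀ x a, i₁ (M.smul x a) = modl.smul (i₁ x) a
  i₂_smul : ∀ x a, i₂ (N.smul x a) = modl.smul (i₂ x) a
  i₁_smulC : ∀ (c : ℂ) x, i₁ (c • x) = c • i₁ x
  i₂_smulC : ∀ (c : ℂ) x, i₂ (c • x) = c • i₂ x
  inner_i₁ : ∀ x y, modl.inner (i₁ x) (i₁ y) = M.inner x y
  inner_i₂ : ∀ x y, modl.inner (i₂ x) (i₂ y) = N.inner x y
  inner_mixed : ∀ x y, modl.inner (i₁ x) (i₂ y) = 0
  decomp : ∀ s, i₁ (p₁ s) + i₂ (p₂ s) = s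
  p₁_i₁ : ∀ x, p₁ (i₁ x) = x
  p₁_i₂ : ∀ y, p₁ (i₂ y) = 0
  p₂_i₁ : ∀ x, p₂ (i₁ x) = 0
  p₂_i₂ : ∀ y, p₂ (i₂ y) = y

/-- A realization of the standard Hilbert C*-module `l₂(I)` over the ideal `I`,
viewed as a Hilbert `A`-module, via its coordinate maps. -/
structure L2Rep {A : Type} [NonUnitalCStarAlgebra A] (I : TwoSidedIdeal A) where
  modl : HilbertModule A
  seq : modl.carrier → ℕ → A
  seq_mem : ∀ x n, seq x n ∈ I
  seq_add : ∀ x y n, seq (x + y) n = seq x n + seq y n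
  seq_smul : ∀ x a n, seq (modl.smul x a) n = seq x n * a
  seq_smulC : ∀ (c : ℂ) x n, seq (c • x) n = c • seq x n
  seq_inner : ∀ x y, Filter.Tendsto
    (fun N => ∑ n ∈ Finset.range N, star (seq x n) * seq y n)
    Filter.atTop (nhds (modl.inner x y))
  seq_surj : ∀ f : ℕ → A, (∀ n, f n ∈ I) →
    (∃ L, Filter.Tendsto (fun N => ∑ n ∈ Finset.range N, star (f n) * f n)
      Filter.atTop (nhds L)) →
    ∃ x, seq x = f

/-- An isomorphism (unitary) of Hilbert C*-modules. -/
structure HIso {A : Type} [NonUnitalCStarAlgebra A] (M N : HilbertModule A) where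
  toFun : M.carrier → N.carrier
  bij : Function.Bijective toFun
  map_add : ∀ x y, toFun (x + y) = toFun x + toFun y
  map_smul : ∀ x a, toFun (M.smul x a) = N.smul (toFun x) a
  map_smulC : ∀ (c : ℂ) x, toFun (c • x) = c • toFun x
  map_inner : ∀ x y, N.inner (toFun x) (toFun y) = M.inner x y

end

noncomputable section

/-- The zero Hilbert C*-module. -/
def HilbertModule.zeroModule (A : Type) [NonUnitalCStarAlgebra A] : HilbertModule A where
  carrier := PUnit
  smul _ _ := PUnit.unit
  inner _ _ := 0
  smul_add := by intros; rfl
  add_smul' := by intros; rfl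
  smul_mul := by intros; rfl
  smulC_smul := by intros; exact (Subsingleton.elim _ _)
  smul_smulC := by intros; exact (Subsingleton.elim _ _)
  inner_add_left := by intros; simp
  inner_smul_right := by intros; simp
  inner_smulC_right := by intros; simp
  inner_star := by intros; simp
  inner_self_pos := fun _ => ⟨0, by simp⟩
  inner_self_definite := fun x _ => Subsingleton.elim _ _
  complete := fun u _ => ⟨PUnit.unit, fun ε hε => ⟨0, fun n _ => by simpa using hε⟩⟩

end


section AuxIdeal

variable {A : Type} [NonUnitalCStarAlgebra A]

private lemma key_numeric_aux (ε : ℝ) (hε : 0 < ε) (t : ℝ) :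
    |t * (1 - t ^ 2 / (t ^ 2 + 4 * ε ^ 2)) ^ 2| ≤ ε := by
  have hδ : (0:ℝ) < 4 * ε ^ 2 := by positivity
  have hpos : (0:ℝ) < t ^ 2 + 4 * ε ^ 2 := by positivity
  have h1mf : 1 - t ^ 2 / (t ^ 2 + 4 * ε ^ 2) = 4 * ε ^ 2 / (t ^ 2 + 4 * ε ^ 2) := by
    field_simp
    ring
  rw [h1mf, abs_mul, abs_of_nonneg (by positivity : (0:ℝ) ≤ (4 * ε ^ 2 / (t ^ 2 + 4 * ε ^ 2)) ^ 2)]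
  rw [div_pow, ← mul_div_assoc, div_le_iff₀ (by positivity)]
  have hA : 2 * |t| * (2 * ε) ≤ t ^ 2 + 4 * ε ^ 2 := by
    nlinarith [sq_nonneg (|t| - 2 * ε), sq_abs t]
  have hA' : (0:ℝ) ≤ 2 * |t| * (2 * ε) := by positivity
  have hB : (2 * |t| * (2 * ε)) * (t ^ 2 + 4 * ε ^ 2) ≤ (t ^ 2 + 4 * ε ^ 2) ^ 2 := by
    nlinarith [mul_le_mul_of_nonneg_right hA hpos.le]
  have hC : (2 * |t| * (2 * ε)) * (4 * ε ^ 2) ≤ (2 * |t| * (2 * ε)) * (t ^ 2 + 4 * ε ^ 2) := by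
    apply mul_le_mul_of_nonneg_left _ hA'
    nlinarith [sq_nonneg t]
  have hD : (2 * |t| * (2 * ε)) * (4 * ε ^ 2) ≤ (t ^ 2 + 4 * ε ^ 2) ^ 2 := le_trans hC hB
  nlinarith [mul_le_mul_of_nonneg_left hD hε.le, abs_nonneg t]

/-- Key approximation lemma: for a selfadjoint `h` there is `u` in the (non-closed) right
ideal generated by `h` with `h - hu - uh + uhu` of small norm. -/
private lemma key_approx_aux (h : A) (hh : IsSelfAdjoint h) (ε : ℝ) (hε : 0 < ε) :
    ∃ u : A, IsSelfAdjoint u ∧ (∃ w, u = h * w) ∧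
      ‖h - h * u - u * h + u * h * u‖ ≤ ε := by
  have hδ : (0:ℝ) < 4 * ε ^ 2 := by positivity
  have hne : ∀ t : ℝ, t ^ 2 + 4 * ε ^ 2 ≠ 0 := fun t => by positivity
  set f : ℝ → ℝ := fun t => t ^ 2 / (t ^ 2 + 4 * ε ^ 2) with hfdef
  set k : ℝ → ℝ := fun t => t / (t ^ 2 + 4 * ε ^ 2) with hkdef
  have hfc : Continuous f := Continuous.div (by fun_prop) (by fun_prop) hne
  have hkc : Continuous k := Continuous.div (by fun_prop) (by fun_prop) hne
  have hf0 : f 0 = 0 := by simp [hfdef]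
  have hk0 : k 0 = 0 := by simp [hkdef]
  refine ⟨cfcₙ f h, cfcₙ_predicate f h, ⟨cfcₙ k h, ?_⟩, ?_⟩
  · have h1 : cfcₙ (fun t : ℝ => t * k t) h = cfcₙ (fun t : ℝ => t) h * cfcₙ k h :=
      cfcₙ_mul _ _ h (by fun_prop) rfl (hkc.continuousOn) hk0
    rw [cfcₙ_id' ℝ h] at h1
    rw [← h1]
    apply cfcₙ_congr
    intro t _
    simp only [hfdef, hkdef]
    ring
  · have e1 : cfcₙ (fun t : ℝ => t * f t) h = h * cfcₙ f h := by
      rw [cfcₙ_mul (fun t : ℝ => t) f h (by fun_prop) rfl (hfc.continuousOn) hf0,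
        cfcₙ_id' ℝ h]
    have e2 : cfcₙ (fun t : ℝ => f t * t) h = cfcₙ f h * h := by
      rw [cfcₙ_mul f (fun t : ℝ => t) h (hfc.continuousOn) hf0 (by fun_prop) rfl,
        cfcₙ_id' ℝ h]
    have e3 : cfcₙ (fun t : ℝ => f t * t * f t) h = cfcₙ f h * h * cfcₙ f h := by
      rw [cfcₙ_mul (fun t : ℝ => f t * t) f h (by fun_prop) (by simp [hf0])
        (hfc.continuousOn) hf0, e2]
    have key : h - h * cfcₙ f h - cfcₙ f h * h + cfcₙ f h * h * cfcₙ f h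
        = cfcₙ (fun t : ℝ => t * (1 - f t) ^ 2) h := by
      rw [← e3, ← e1, ← e2]
      nth_rw 1 [← cfcₙ_id' ℝ h]
      rw [← cfcₙ_sub (fun t : ℝ => t) (fun t : ℝ => t * f t) h (by fun_prop) rfl
        (by fun_prop) (by simp [hf0])]
      rw [← cfcₙ_sub _ (fun t : ℝ => f t * t) h (by fun_prop) (by simp [hf0])
        (by fun_prop) (by simp [hf0])]
      rw [← cfcₙ_add _ (fun t : ℝ => f t * t * f t) h (by fun_prop) (by simp [hf0])
        (by fun_prop) (by simp [hf0])]
      apply cfcₙ_congr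
      intro t _
      simp only [hfdef]
      ring
    rw [key]
    apply norm_cfcₙ_le
    intro t _
    rw [Real.norm_eq_abs]
    exact key_numeric_aux ε hε t

private lemma sq_le_trick_aux {r ε : ℝ} (hr : 0 ≤ r) (hε : 0 < ε) (h : r * r ≤ ε ^ 2) :
    r ≤ ε := by nlinarith

private lemma mem_of_approx_aux {I : TwoSidedIdeal A} (hI : IsClosed (I : Set A)) (x : A)
    (h : ∀ ε : ℝ, 0 < ε → ∃ y ∈ I, ‖x - y‖ < ε) : x ∈ I := by
  have : x ∈ closure (I : Set A) := by
    rw [Metric.mem_closure_iff]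
    intro ε hε
    obtain ⟨y, hy, hxy⟩ := h ε hε
    exact ⟨y, hy, by rwa [dist_eq_norm]⟩
  rwa [hI.closure_eq] at this

private lemma star_mem_of_mem_aux {I : TwoSidedIdeal A} (hI : IsClosed (I : Set A)) {a : A}
    (ha : a ∈ I) : star a ∈ I := by
  apply mem_of_approx_aux hI
  intro ε hε
  obtain ⟨u, hu_sa, ⟨w, hw⟩, hbound⟩ :=
    key_approx_aux (star a * a) (IsSelfAdjoint.star_mul_self a) ((ε / 2) ^ 2) (by positivity)
  have hhI : star a * a ∈ I := I.mul_mem_left _ _ ha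
  have huI : u ∈ I := hw ▸ I.mul_mem_right _ _ hhI
  refine ⟨u * star a, I.mul_mem_right _ _ huI, ?_⟩
  have hexp : (star a - u * star a) * star (star a - u * star a)
      = star a * a - star a * a * u - u * (star a * a) + u * (star a * a) * u := by
    simp only [star_sub, star_star, star_mul, hu_sa.star_eq]
    noncomm_ring
  have hnorm2 : ‖star a - u * star a‖ * ‖star a - u * star a‖ ≤ (ε / 2) ^ 2 := by
    rw [← CStarRing.norm_self_mul_star, hexp]
    exact hbound
  have := sq_le_trick_aux (norm_nonneg _) (by positivity) hnorm2
  linarith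

private lemma smulC_mem_of_mem_aux {I : TwoSidedIdeal A} (hI : IsClosed (I : Set A)) {a : A}
    (ha : a ∈ I) (c : ℂ) : c • a ∈ I := by
  apply mem_of_approx_aux hI
  intro ε hε
  set η : ℝ := ε / (2 * (‖c‖ + 1)) with hη
  have hηpos : 0 < η := by positivity
  obtain ⟨u, hu_sa, ⟨w, hw⟩, hbound⟩ :=
    key_approx_aux (star a * a) (IsSelfAdjoint.star_mul_self a) (η ^ 2) (by positivity)
  have hhI : star a * a ∈ I := I.mul_mem_left _ _ ha
  refine ⟨a * (c • u), I.mul_mem_right _ _ ha, ?_⟩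
  have hexp : star (a - a * u) * (a - a * u)
      = star a * a - star a * a * u - u * (star a * a) + u * (star a * a) * u := by
    simp only [star_sub, star_mul, hu_sa.star_eq]
    noncomm_ring
  have hnorm2 : ‖a - a * u‖ * ‖a - a * u‖ ≤ η ^ 2 := by
    rw [← CStarRing.norm_star_mul_self, hexp]
    exact hbound
  have h1 : ‖a - a * u‖ ≤ η := sq_le_trick_aux (norm_nonneg _) hηpos hnorm2
  have h2 : c • a - a * (c • u) = c • (a - a * u) := by
    rw [mul_smul_comm, ← smul_sub]
  rw [h2, norm_smul]
  calc ‖c‖ * ‖a - a * u‖ ≤ (‖c‖ + 1) * η :=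
        mul_le_mul (by linarith) h1 (norm_nonneg _) (by positivity)
    _ = ε / 2 := by
      rw [hη, mul_div_assoc', mul_comm 2, ← div_div, mul_div_cancel_left₀ _ (by positivity)]
    _ < ε := by linarith

namespace HilbertModule

variable (M : HilbertModule A)

private lemma inner_zero_right' (x : M.carrier) : M.inner x 0 = 0 := by
  have h := M.inner_smulC_right 0 x 0
  rw [zero_smul] at h
  simpa using h

private lemma inner_add_right' (x y z : M.carrier) :
    M.inner x (y + z) = M.inner x y + M.inner x z := by
  have h := congrArg star (M.inner_add_left y z x)
  rwa [star_add, M.inner_star, M.inner_star, M.inner_star] at h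

private lemma inner_smulC_left' (c : ℂ) (x y : M.carrier) :
    M.inner (c • x) y = (starRingEnd ℂ c) • M.inner x y := by
  rw [← M.inner_star, M.inner_smulC_right, star_smul, M.inner_star]
  rfl

private lemma inner_sub_right' (x y z : M.carrier) :
    M.inner x (y - z) = M.inner x y - M.inner x z := by
  have hneg : M.inner x (-z) = -(M.inner x z) := by
    rw [← neg_one_smul ℂ z, M.inner_smulC_right, neg_one_smul]
  rw [sub_eq_add_neg, M.inner_add_right', hneg, sub_eq_add_neg]

private lemma inner_sub_left' (x y z : M.carrier) :
    M.inner (x - y) z = M.inner x z - M.inner y z := by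
  rw [← M.inner_star, M.inner_sub_right', star_sub, M.inner_star, M.inner_star]

private lemma inner_smul_left' (x y : M.carrier) (a : A) :
    M.inner (M.smul x a) y = star a * M.inner x y := by
  rw [← M.inner_star, M.inner_smul_right, star_mul, M.inner_star]

end HilbertModule

end AuxIdeal

open HilbertModule in
/-- For a Hilbert C*-module `M` over `A` and a closed two-sided ideal
`I ⊆ A`, the closed linear span `MI` of `{m · i : m ∈ M, i ∈ I}` equals
`{z ∈ M : ⟨z, z⟩ ∈ I}`. -/
theorem idealSpanClosure_eq_idealSet
    {A : Type} [NonUnitalCStarAlgebra A] (I : TwoSidedIdeal A)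
    (hI : IsClosed (I : Set A)) (M : HilbertModule A) :
    idealSpanClosure M I = idealSet M I := by
  ext z
  simp only [idealSpanClosure, idealSet, Set.mem_setOf_eq]
  constructor
  · intro hz
    have claimA : ∀ w ∈ Submodule.span ℂ
        {z : M.carrier | ∃ m, ∃ a ∈ I, z = M.smul m a}, ∀ x, M.inner x w ∈ I := by
      intro w hw
      induction hw using Submodule.span_induction with
      | mem w hwmem =>
        obtain ⟨m, a, haI, rfl⟩ := hwmem
        intro x
        rw [M.inner_smul_right]
        exact I.mul_mem_left _ _ haI
      | zero => intro x; rw [M.inner_zero_right']; exact I.zero_mem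
      | add p q _ _ hp hq =>
        intro x
        rw [M.inner_add_right']
        exact I.add_mem (hp x) (hq x)
      | smul c p _ hp =>
        intro x
        rw [M.inner_smulC_right]
        exact smulC_mem_of_mem_aux hI (hp x) c
    apply mem_of_approx_aux hI
    intro ε hε
    obtain ⟨w, hwspan, hd⟩ := hz (Real.sqrt ε) (Real.sqrt_pos.mpr hε)
    have hwspan' : w ∈ Submodule.span ℂ
        {z : M.carrier | ∃ m, ∃ a ∈ I, z = M.smul m a} := hwspan
    have h1 : M.inner (z - w) w ∈ I := claimA w hwspan' _
    have h2 : M.inner w (z - w) ∈ I := by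
      rw [← M.inner_star]
      exact star_mem_of_mem_aux hI h1
    refine ⟨M.inner (z - w) w + M.inner w (z - w) + M.inner w w,
      I.add_mem (I.add_mem h1 h2) (claimA w hwspan' w), ?_⟩
    have hz_eq : M.inner z z - (M.inner (z - w) w + M.inner w (z - w) + M.inner w w)
        = M.inner (z - w) (z - w) := by
      have e : M.inner z z = M.inner ((z - w) + w) ((z - w) + w) := by
        rw [sub_add_cancel]
      rw [e, M.inner_add_left, M.inner_add_right', M.inner_add_right']
      abel
    rw [hz_eq]
    have h4 := Real.sq_sqrt (norm_nonneg (M.inner (z - w) (z - w)))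
    have h5 := Real.sq_sqrt hε.le
    have hd' : Real.sqrt ‖M.inner (z - w) (z - w)‖ < Real.sqrt ε := hd
    nlinarith [Real.sqrt_nonneg ‖M.inner (z - w) (z - w)‖, Real.sqrt_nonneg ε]
  · intro hz ε hε
    have hsa : IsSelfAdjoint (M.inner z z) := M.inner_star z z
    obtain ⟨u, hu_sa, ⟨w, hwu⟩, hbound⟩ :=
      key_approx_aux (M.inner z z) hsa ((ε / 2) ^ 2) (by positivity)
    have huI : u ∈ I := hwu ▸ I.mul_mem_right _ _ hz
    refine ⟨M.smul z u, Submodule.subset_span ⟨z, u, huI, rfl⟩, ?_⟩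
    have i1 : M.inner z (M.smul z u) = M.inner z z * u := M.inner_smul_right ..
    have i2 : M.inner (M.smul z u) z = star u * M.inner z z := M.inner_smul_left' ..
    have i3 : M.inner (M.smul z u) (M.smul z u) = star u * (M.inner z z * u) := by
      rw [M.inner_smul_left', i1]
    have hinner : M.inner (z - M.smul z u) (z - M.smul z u)
        = M.inner z z - M.inner z z * u - u * M.inner z z + u * M.inner z z * u := by
      rw [M.inner_sub_right', M.inner_sub_left', M.inner_sub_left', i1, i2, i3,
        hu_sa.star_eq]
      noncomm_ring
    show Real.sqrt ‖M.inner (z - M.smul z u) (z - M.smul z u)‖ < ε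
    rw [hinner]
    calc Real.sqrt ‖M.inner z z - M.inner z z * u - u * M.inner z z + u * M.inner z z * u‖
        ≤ Real.sqrt ((ε / 2) ^ 2) := Real.sqrt_le_sqrt hbound
      _ = ε / 2 := Real.sqrt_sq (by positivity)
      _ < ε := by linarith
end

section
/- Let A be a σ-unital C*-algebra and I a σ-unital closed two-sided ideal of A. The following are equivalent: (i) I is a direct summand of A as a right Hilbert A-module; (ii) there is a projection P_I in the multiplier algebra M(A) with P_I·A ⊆ I such that the restriction of P_I to I is Murray–von Neumann equivalent to the unit of M(I). Moreover any two projections satisfying (ii) are Murray–von Neumann equivalent in M(A). -/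
/- ## Multiplier algebras, abstractly characterized. -/

noncomputable section

/-- An abstract characterization of the multiplier algebra `M(A)` of `A`: a unital
C*-algebra `MA` containing `A` as an essential two-sided ideal, such that every
double centralizer of `A` is realized by an element of `MA`. -/
structure MultAlgebraOf (A : Type) [NonUnitalCStarAlgebra A]
    (MA : Type) [CStarAlgebra MA] where
  ι : A → MA
  ι_add : ∀ a b, ι (a + b) = ι a + ι b
  ι_mul : ∀ a b, ι (a * b) = ι a * ι b
  ι_star : ∀ a, ι (star a) = star (ι a)
  ι_smulC : ∀ (c : ℂ) a, ι (c • a) = c • ι a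
  ι_inj : Function.Injective ι
  ideal_l : ∀ (m : MA) (a : A), ∃ b, m * ι a = ι b
  ideal_r : ∀ (m : MA) (a : A), ∃ b, ι a * m = ι b
  essential : ∀ m : MA, (∀ a, m * ι a = 0) → m = 0
  represents : ∀ L R : A → A,
    (∀ a b, L (a * b) = L a * b) → (∀ a b, R (a * b) = a * R b) →
    (∀ a b, ι a * ι (L b) = ι (R a) * ι b) →
    ∃ m : MA, (∀ a, m * ι a = ι (L a)) ∧ (∀ a, ι a * m = ι (R a))

variable {A B MA MB : Type}
variable [NonUnitalCStarAlgebra A] [NonUnitalCStarAlgebra B]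
variable [CStarAlgebra MA] [CStarAlgebra MB]

/-- A C*-algebra is σ-unital iff it contains a strictly positive element. -/
def SigmaUnitalAlg (A : Type) [NonUnitalCStarAlgebra A] : Prop :=
  ∃ h : A, (∃ b, h = star b * b) ∧
    ∀ x : A, ∀ ε : ℝ, 0 < ε → ∃ a : A, ‖x - h * a‖ < ε

/-- A closed two-sided ideal is σ-unital iff it contains a strictly positive element. -/
def SigmaUnitalIdeal (I : TwoSidedIdeal A) : Prop :=
  ∃ h : A, h ∈ I ∧ (∃ b, h = star b * b) ∧
    ∀ x ∈ I, ∀ ε : ℝ, 0 < ε → ∃ a : A, ‖x - h * a‖ < ε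

/-- Stability of the ideal `I` (equivalently, `I ≅ I ⊗ K`): there is an isomorphism
of Hilbert modules `l₂(I) ≅ I`, given by a sequence of isometries of `I` with
orthogonal ranges whose joint range is dense. -/
def IdealStable (I : TwoSidedIdeal A) : Prop :=
  ∃ t : ℕ → A → A,
    (∀ n, ∀ x ∈ I, t n x ∈ I) ∧
    (∀ n, ∀ x ∈ I, ∀ y ∈ I, t n (x + y) = t n x + t n y) ∧
    (∀ n a, ∀ x ∈ I, t n (x * a) = t n x * a) ∧
    (∀ m n, ∀ x ∈ I, ∀ y ∈ I,
      star (t m x) * t n y = if m = n then star x * y else 0) ∧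
    (∀ x ∈ I, ∀ ε : ℝ, 0 < ε → ∃ (N : ℕ) (y : ℕ → A), (∀ i, y i ∈ I) ∧
      ‖x - ∑ i ∈ Finset.range N, t i (y i)‖ < ε)

/-- `A ≅ A ⊕ I` as right Hilbert `A`-modules: there is a unitary `x ↦ (f x, g x)`. -/
def SummandIso (I : TwoSidedIdeal A) : Prop :=
  ∃ f g : A → A, (∀ x, g x ∈ I) ∧
    (∀ x y, f (x + y) = f x + f y) ∧ (∀ x y, g (x + y) = g x + g y) ∧
    (∀ x a, f (x * a) = f x * a) ∧ (∀ x a, g (x * a) = g x * a) ∧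
    (∀ x y, star x * y = star (f x) * f y + star (g x) * g y) ∧
    (∀ a : A, ∀ i ∈ I, ∃ x, f x = a ∧ g x = i)

/-- An isomorphism of Hilbert `A`-submodules `S ≅ T` of `A`. -/
def SetHIso (S T : Set A) : Prop :=
  ∃ f : A → A, Set.BijOn f S T ∧
    (∀ x ∈ S, ∀ y ∈ S, f (x + y) = f x + f y) ∧
    (∀ x ∈ S, ∀ a : A, f (x * a) = f x * a) ∧
    (∀ (c : ℂ), ∀ x ∈ S, f (c • x) = c • f x) ∧
    (∀ x ∈ S, ∀ y ∈ S, star (f x) * f y = star x * y)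

/-- A projection in a C*-algebra. -/
def IsProjection (p : MA) : Prop := p * p = p ∧ star p = p

/-- Murray–von Neumann equivalence of projections. -/
def MvN (p q : MA) : Prop := ∃ v : MA, star v * v = p ∧ v * star v = q

/-- The restriction of the multiplier `p` to the invariant submodule `I` is
Murray–von Neumann equivalent, in `M(I) = B(I)`, to the unit of `M(I)`:
there is an adjointable `v : I → I` with `v* v = p|_I` and `v v* = 1`. -/
def RestrictEquivOne (MM : MultAlgebraOf A MA) (I : TwoSidedIdeal A) (p : MA) : Prop :=
  ∃ v w : A → A,
    (∀ x ∈ I, v x ∈ I) ∧ (∀ x ∈ I, w x ∈ I) ∧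
    (∀ x ∈ I, ∀ y ∈ I, star (v x) * y = star x * w y) ∧
    (∀ x ∈ I, MM.ι (w (v x)) = p * MM.ι x) ∧
    (∀ x ∈ I, v (w x) = x)

/-- The conditions (ii) of Lemma `piprojections`: `p` is a projection of `M(A)` with
`p · A ⊆ I` whose restriction to `I` is equivalent to the unit of `M(I)`. -/
def PIProjection (MM : MultAlgebraOf A MA) (I : TwoSidedIdeal A) (p : MA) : Prop :=
  IsProjection p ∧ (∀ a : A, ∃ j ∈ I, p * MM.ι a = MM.ι j) ∧
    RestrictEquivOne MM I p

end


noncomputable section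

lemma my_hereditary {A : Type} [NonUnitalCStarAlgebra A] (I : TwoSidedIdeal A)
    (hI : IsClosed (I : Set A)) (x : A) (hx : star x * x ∈ I) : x ∈ I := by
  set a := star x * x with ha_def
  have ha : IsSelfAdjoint a := IsSelfAdjoint.star_mul_self x
  have key : ∀ ε : ℝ, 0 < ε → ∃ y ∈ I, ‖x - y‖ < ε := by
    intro ε hε
    set r : ℝ := ε ^ 2 / 2 with hr_def
    have hr : 0 < r := by positivity
    set δ : ℝ := r ^ 2 with hδ_def
    have hδ : 0 < δ := by positivity
    have hden : ∀ t : ℝ, t ^ 2 + δ ≠ 0 := fun t => by positivity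
    have hdc : Continuous (fun t : ℝ => (t ^ 2 + δ)⁻¹) :=
      ((continuous_pow 2).add continuous_const).inv₀ hden
    set ψ : ℝ → ℝ := fun t => t ^ 2 * (t ^ 2 + δ)⁻¹ with hψ_def
    set g : ℝ → ℝ := fun t => t * (t ^ 2 + δ)⁻¹ with hg_def
    have hgc : ContinuousOn g (quasispectrum ℝ a) := (continuous_id.mul hdc).continuousOn
    have hψc : ContinuousOn ψ (quasispectrum ℝ a) := ((continuous_pow 2).mul hdc).continuousOn
    have hψ0 : ψ 0 = 0 := by simp [hψ_def]
    have hg0 : g 0 = 0 := by simp [hg_def]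
    have hidc : ContinuousOn (fun t : ℝ => t) (quasispectrum ℝ a) := continuous_id.continuousOn
    set u : A := cfcₙ ψ a with hu_def
    have hu_sa : IsSelfAdjoint u := cfcₙ_predicate _ a
    have hau : a * cfcₙ g a = u := by
      have h := cfcₙ_mul (fun t : ℝ => t) g a hidc (by simp) hgc hg0
      rw [cfcₙ_id' ℝ a] at h
      rw [← h]
      exact cfcₙ_congr fun t _ => by simp only [hψ_def, hg_def]; ring
    have huI : x * u ∈ I := by
      rw [← hau]
      exact I.mul_mem_left _ _ (I.mul_mem_right _ _ hx)
    refine ⟨x * u, huI, ?_⟩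
    have e1 : a * u = cfcₙ (fun t => t * ψ t) a := by
      have h := cfcₙ_mul (fun t : ℝ => t) ψ a hidc (by simp) hψc hψ0
      rw [cfcₙ_id' ℝ a] at h
      exact h.symm
    have e2 : u * a = cfcₙ (fun t => ψ t * t) a := by
      have h := cfcₙ_mul ψ (fun t : ℝ => t) a hψc hψ0 hidc (by simp)
      rw [cfcₙ_id' ℝ a] at h
      exact h.symm
    have e3 : u * (a * u) = cfcₙ (fun t => ψ t * (t * ψ t)) a := by
      rw [e1]
      exact (cfcₙ_mul _ _ a hψc hψ0 (hidc.mul hψc) (by simp [hψ0])).symm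
    have etot : star (x - x * u) * (x - x * u)
        = cfcₙ (fun t => t - t * ψ t - ψ t * t + ψ t * (t * ψ t)) a := by
      have expand : star (x - x * u) * (x - x * u) = ((a - a * u - u * a) + u * (a * u)) := by
        rw [star_sub, star_mul, hu_sa.star_eq]
        simp only [sub_mul, mul_sub, ha_def]
        noncomm_ring
      have E : cfcₙ (fun t => t - t * ψ t - ψ t * t + ψ t * (t * ψ t)) a
          = ((a - cfcₙ (fun t => t * ψ t) a - cfcₙ (fun t => ψ t * t) a)
            + cfcₙ (fun t => ψ t * (t * ψ t)) a) := by
        rw [cfcₙ_add (fun t => t - t * ψ t - ψ t * t) (fun t => ψ t * (t * ψ t)) a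
            ((hidc.sub (hidc.mul hψc)).sub (hψc.mul hidc)) (by simp [hψ0])
            (hψc.mul (hidc.mul hψc)) (by simp [hψ0]),
          cfcₙ_sub (fun t => t - t * ψ t) (fun t => ψ t * t) a
            (hidc.sub (hidc.mul hψc)) (by simp [hψ0]) (hψc.mul hidc) (by simp [hψ0]),
          cfcₙ_sub (fun t : ℝ => t) (fun t => t * ψ t) a hidc (by simp)
            (hidc.mul hψc) (by simp [hψ0]), cfcₙ_id' ℝ a]
      rw [expand, e3, e2, e1, E]
    have hbound : ‖star (x - x * u) * (x - x * u)‖ ≤ r := by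
      rw [etot]
      apply norm_cfcₙ_le
      intro t _
      have habs : (0:ℝ) ≤ |t| := abs_nonneg t
      have hpos : (0:ℝ) < t ^ 2 + δ := by positivity
      have h1 : t - t * ψ t - ψ t * t + ψ t * (t * ψ t) = t * (δ * (t ^ 2 + δ)⁻¹) ^ 2 := by
        simp only [hψ_def]
        field_simp
        ring
      rw [h1, Real.norm_eq_abs, abs_mul, abs_pow, abs_mul, abs_of_pos hδ,
        abs_of_pos (inv_pos.mpr hpos)]
      have hkey : |t| * δ ^ 2 ≤ r * (t ^ 2 + δ) ^ 2 := by
        have hkey' : |t| * (r ^ 2) ^ 2 ≤ r * (|t| ^ 2 + r ^ 2) ^ 2 := by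
          nlinarith [mul_nonneg (pow_nonneg hr.le 3) (sq_nonneg (|t| - r)),
            mul_nonneg hr.le (pow_nonneg habs 4),
            mul_nonneg (pow_nonneg habs 2) (pow_nonneg hr.le 3),
            mul_nonneg habs (pow_nonneg hr.le 4)]
        rw [sq_abs] at hkey'
        rw [hδ_def]
        exact hkey'
      calc |t| * (δ * (t ^ 2 + δ)⁻¹) ^ 2 = (|t| * δ ^ 2) * ((t ^ 2 + δ) ^ 2)⁻¹ := by
            rw [mul_pow, inv_pow, mul_assoc]
        _ ≤ (r * (t ^ 2 + δ) ^ 2) * ((t ^ 2 + δ) ^ 2)⁻¹ := by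
            exact mul_le_mul_of_nonneg_right hkey (by positivity)
        _ = r := by
            rw [mul_assoc, mul_inv_cancel₀ (by positivity : ((t ^ 2 + δ) ^ 2 : ℝ) ≠ 0), mul_one]
    have h2 : ‖x - x * u‖ * ‖x - x * u‖ ≤ ε ^ 2 / 2 := by
      rw [← CStarRing.norm_star_mul_self]
      exact hbound
    nlinarith [norm_nonneg (x - x * u)]
  have : x ∈ closure (I : Set A) := by
    rw [Metric.mem_closure_iff]
    intro ε hε
    obtain ⟨y, hy, hxy⟩ := key ε hε
    exact ⟨y, hy, by rwa [dist_eq_norm]⟩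
  rwa [hI.closure_eq] at this


lemma my_dz {A : Type} [NonUnitalCStarAlgebra A] (d : A) (h : star d * d = 0) : d = 0 := by
  have hn := CStarRing.norm_star_mul_self (x := d)
  rw [h, norm_zero] at hn
  have : ‖d‖ = 0 := by nlinarith [norm_nonneg d]
  exact norm_eq_zero.mp this

variable {A MA : Type} [NonUnitalCStarAlgebra A] [CStarAlgebra MA]

lemma dir2 (I : TwoSidedIdeal A) (MM : MultAlgebraOf A MA) {p : MA}
    (hp : PIProjection MM I p) :
    SetHIso {a : A | p * MM.ι a = MM.ι a} (I : Set A) := by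
  obtain ⟨⟨hp2, hps⟩, hrange, v, w, hvI, hwI, adj, hwv, hvw⟩ := hp
  set S : Set A := {a : A | p * MM.ι a = MM.ι a} with hS_def
  have hSmem : ∀ x : A, x ∈ S ↔ p * MM.ι x = MM.ι x := fun x => Iff.rfl
  have hSI : ∀ x ∈ S, x ∈ I := by
    intro x hx
    obtain ⟨j, hjI, hj⟩ := hrange x
    have hxj : MM.ι x = MM.ι j := by rw [← hj]; exact ((hSmem x).mp hx).symm
    exact (MM.ι_inj hxj) ▸ hjI
  have hwS : ∀ y ∈ I, w y ∈ S := by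
    intro y hy
    have h1 := hwv (w y) (hwI y hy)
    rw [hvw y hy] at h1
    exact h1.symm
  have hwvS : ∀ x ∈ S, w (v x) = x := by
    intro x hx
    apply MM.ι_inj
    rw [hwv x (hSI x hx)]
    exact (hSmem x).mp hx
  have key : ∀ x ∈ S, ∀ y ∈ S, star (v x) * v y = star x * y := by
    intro x hx y hy
    rw [adj x (hSI x hx) (v y) (hvI y (hSI y hy)), hwvS y hy]
  have hSadd : ∀ x ∈ S, ∀ y ∈ S, x + y ∈ S := by
    intro x hx y hy
    show p * MM.ι (x + y) = MM.ι (x + y)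
    rw [MM.ι_add, mul_add, (hSmem x).mp hx, (hSmem y).mp hy]
  have hSmul : ∀ x ∈ S, ∀ a : A, x * a ∈ S := by
    intro x hx a
    show p * MM.ι (x * a) = MM.ι (x * a)
    rw [MM.ι_mul, ← mul_assoc, (hSmem x).mp hx]
  have hSsmul : ∀ (c : ℂ), ∀ x ∈ S, c • x ∈ S := by
    intro c x hx
    show p * MM.ι (c • x) = MM.ι (c • x)
    rw [MM.ι_smulC, mul_smul_comm, (hSmem x).mp hx]
  refine ⟨v, ⟨fun x hx => hvI x (hSI x hx), ?_, ?_⟩, ?_, ?_, ?_, key⟩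
  · -- InjOn
    intro x hx y hy hxy
    rw [← hwvS x hx, ← hwvS y hy, hxy]
  · -- SurjOn
    intro y hy
    exact ⟨w y, hwS y hy, hvw y hy⟩
  · -- additivity
    intro x hx y hy
    have hxy := hSadd x hx y hy
    have hz : ∀ s ∈ S, star (v s) * (v (x + y) - v x - v y) = 0 := by
      intro s hs
      rw [mul_sub, mul_sub, key s hs _ hxy, key s hs x hx, key s hs y hy, mul_add]
      abel
    have hd := my_dz (v (x + y) - v x - v y) ?_
    · rwa [sub_sub, sub_eq_zero] at hd
    · rw [star_sub, star_sub, sub_mul, sub_mul, hz _ hxy, hz x hx, hz y hy]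
      simp
  · -- module
    intro x hx a
    have hxa := hSmul x hx a
    have hz : ∀ s ∈ S, star (v s) * (v (x * a) - v x * a) = 0 := by
      intro s hs
      have t1 : star (v s) * v (x * a) = star s * (x * a) := key s hs _ hxa
      have t2 : star (v s) * (v x * a) = star s * x * a := by
        rw [← mul_assoc, key s hs x hx]
      rw [mul_sub, t1, t2, mul_assoc, sub_self]
    have hd := my_dz (v (x * a) - v x * a) ?_
    · rwa [sub_eq_zero] at hd
    · rw [star_sub, sub_mul, hz _ hxa, star_mul, mul_assoc, hz x hx]
      simp
  · -- smul
    intro c x hx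
    have hcx := hSsmul c x hx
    have hz : ∀ s ∈ S, star (v s) * (v (c • x) - c • v x) = 0 := by
      intro s hs
      have t1 : star (v s) * v (c • x) = c • (star s * x) := by
        rw [key s hs _ hcx, mul_smul_comm]
      have t2 : star (v s) * (c • v x) = c • (star s * x) := by
        rw [mul_smul_comm, key s hs x hx]
      rw [mul_sub, t1, t2, sub_self]
    have hd := my_dz (v (c • x) - c • v x) ?_
    · rwa [sub_eq_zero] at hd
    · rw [star_sub, sub_mul, hz _ hcx, star_smul, smul_mul_assoc, hz x hx]
      simp


lemma dir1 (I : TwoSidedIdeal A) (hI : IsClosed (I : Set A)) (MM : MultAlgebraOf A MA)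
    {p : MA} (hp : IsProjection p)
    (hiso : SetHIso {a : A | p * MM.ι a = MM.ι a} (I : Set A)) :
    PIProjection MM I p := by
  obtain ⟨hp2, hps⟩ := hp
  obtain ⟨f, ⟨fmaps, finj, fsurj⟩, fadd, fmul, fsmul, finner⟩ := hiso
  set S : Set A := {a : A | p * MM.ι a = MM.ι a} with hS_def
  have hSmem : ∀ x : A, x ∈ S ↔ p * MM.ι x = MM.ι x := fun x => Iff.rfl
  have hP : ∀ a : A, ∃ b : A, p * MM.ι a = MM.ι b := fun a => MM.ideal_l p a
  choose P hPeq using hP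
  have hPS : ∀ a : A, P a ∈ S := by
    intro a
    show p * MM.ι (P a) = MM.ι (P a)
    rw [← hPeq a, ← mul_assoc, hp2]
  have hSI : ∀ x ∈ S, x ∈ I := by
    intro x hx
    have hfx : f x ∈ (I : Set A) := fmaps hx
    have hmem : star x * x ∈ I := by
      rw [← finner x hx x hx]
      exact I.mul_mem_left _ _ (SetLike.mem_coe.mp hfx)
    exact my_hereditary I hI x hmem
  have hfixS : ∀ x ∈ S, P x = x := by
    intro x hx
    apply MM.ι_inj
    rw [← hPeq x]
    exact (hSmem x).mp hx
  have hsur : ∀ y : A, ∃ x : A, y ∈ (I : Set A) → (x ∈ S ∧ f x = y) := by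
    intro y
    by_cases h : y ∈ (I : Set A)
    · obtain ⟨x, hx, hfx⟩ := fsurj h
      exact ⟨x, fun _ => ⟨hx, hfx⟩⟩
    · exact ⟨0, fun hy => absurd hy h⟩
  choose w hwspec using hsur
  have hwS : ∀ y : A, y ∈ I → w y ∈ S := fun y hy => (hwspec y (SetLike.mem_coe.mpr hy)).1
  have hfw : ∀ y : A, y ∈ I → f (w y) = y := fun y hy => (hwspec y (SetLike.mem_coe.mpr hy)).2
  refine ⟨⟨hp2, hps⟩, fun a => ⟨P a, hSI _ (hPS a), hPeq a⟩, fun x => f (P x), w, ?_, ?_, ?_, ?_, ?_⟩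
  · -- v maps I to I
    intro x _
    exact SetLike.mem_coe.mp (fmaps (hPS x))
  · -- w maps I to I
    intro x hx
    exact hSI _ (hwS x hx)
  · -- adjoint relation
    intro x hx y hy
    calc star (f (P x)) * y = star (f (P x)) * f (w y) := by rw [hfw y hy]
      _ = star (P x) * w y := finner _ (hPS x) _ (hwS y hy)
      _ = star x * w y := by
          apply MM.ι_inj
          rw [MM.ι_mul, MM.ι_mul, MM.ι_star, MM.ι_star, ← hPeq x, star_mul, hps, mul_assoc,
            (hSmem (w y)).mp (hwS y hy)]
  · -- w (v x) recovers p
    intro x hx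
    have h1 : w (f (P x)) = P x := by
      have hfPx : f (P x) ∈ I := SetLike.mem_coe.mp (fmaps (hPS x))
      have h2 : f (w (f (P x))) = f (P x) := hfw _ hfPx
      exact finj (hwS _ hfPx) (hPS x) h2
    rw [h1, ← hPeq x]
  · -- v (w x) = x
    intro x hx
    show f (P (w x)) = x
    rw [hfixS (w x) (hwS x hx), hfw x hx]


lemma vw_facts (I : TwoSidedIdeal A) (MM : MultAlgebraOf A MA) {p : MA}
    (v w : A → A)
    (hv : ∀ x ∈ I, v x ∈ I) (hw : ∀ x ∈ I, w x ∈ I)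
    (adj : ∀ x ∈ I, ∀ y ∈ I, star (v x) * y = star x * w y)
    (hwv : ∀ x ∈ I, MM.ι (w (v x)) = p * MM.ι x)
    (hvw : ∀ x ∈ I, v (w x) = x) :
    (∀ x ∈ I, ∀ y ∈ I, star (w x) * y = star x * v y) ∧
    (∀ x ∈ I, p * MM.ι (w x) = MM.ι (w x)) ∧
    (∀ x ∈ I, ∀ a : A, v (x * a) = v x * a) ∧
    (∀ x ∈ I, ∀ a : A, w (x * a) = w x * a) := by
  have adj' : ∀ x ∈ I, ∀ y ∈ I, star (w x) * y = star x * v y := by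
    intro x hx y hy
    have h := adj y hy x hx
    calc star (w x) * y = star (star y * w x) := by rw [star_mul, star_star]
      _ = star (star (v y) * x) := by rw [← h]
      _ = star x * v y := by rw [star_mul, star_star]
  have hpw : ∀ x ∈ I, p * MM.ι (w x) = MM.ι (w x) := by
    intro x hx
    have h := hwv (w x) (hw x hx)
    rw [hvw x hx] at h
    exact h.symm
  have key_w : ∀ u ∈ I, ∀ u' ∈ I, star (w u) * w u' = star u * u' := by
    intro u hu u' hu'
    rw [adj' u hu (w u') (hw u' hu'), hvw u' hu']
  have hwvlin : ∀ x ∈ I, ∀ a : A, w (v (x * a)) = w (v x) * a := by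
    intro x hx a
    apply MM.ι_inj
    rw [MM.ι_mul, hwv _ (I.mul_mem_right x a hx), hwv x hx, MM.ι_mul, mul_assoc]
  have vlin : ∀ x ∈ I, ∀ a : A, v (x * a) = v x * a := by
    intro x hx a
    have hxa : x * a ∈ I := I.mul_mem_right x a hx
    have hz : ∀ s ∈ I, star (v s) * (v (x * a) - v x * a) = 0 := by
      intro s hs
      have t1 : star (v s) * v (x * a) = star s * (w (v x) * a) := by
        rw [adj s hs _ (hv _ hxa), hwvlin x hx a]
      have t2 : star (v s) * (v x * a) = star s * w (v x) * a := by
        rw [← mul_assoc, adj s hs _ (hv x hx)]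
      rw [mul_sub, t1, t2, mul_assoc, sub_self]
    have hd := my_dz (v (x * a) - v x * a) ?_
    · rwa [sub_eq_zero] at hd
    · rw [star_sub, sub_mul, hz _ hxa, star_mul, mul_assoc, hz x hx]
      simp
  have wlin : ∀ x ∈ I, ∀ a : A, w (x * a) = w x * a := by
    intro x hx a
    have hxa : x * a ∈ I := I.mul_mem_right x a hx
    have hz : ∀ s ∈ I, star (w s) * (w (x * a) - w x * a) = 0 := by
      intro s hs
      have t1 : star (w s) * w (x * a) = star s * (x * a) := key_w s hs _ hxa
      have t2 : star (w s) * (w x * a) = star s * x * a := by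
        rw [← mul_assoc, key_w s hs x hx]
      rw [mul_sub, t1, t2, mul_assoc, sub_self]
    have hd := my_dz (w (x * a) - w x * a) ?_
    · rwa [sub_eq_zero] at hd
    · rw [star_sub, sub_mul, hz _ hxa, star_mul, mul_assoc, hz x hx]
      simp
  exact ⟨adj', hpw, vlin, wlin⟩

lemma my_mvn (I : TwoSidedIdeal A) (MM : MultAlgebraOf A MA) {p₁ p₂ : MA}
    (h₁ : PIProjection MM I p₁) (h₂ : PIProjection MM I p₂) : MvN p₁ p₂ := by
  obtain ⟨⟨hq₁, hs₁⟩, hr₁, v₁, w₁, hv₁, hw₁, adj₁, hwv₁, hvw₁⟩ := h₁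
  obtain ⟨⟨hq₂, hs₂⟩, hr₂, v₂, w₂, hv₂, hw₂, adj₂, hwv₂, hvw₂⟩ := h₂
  choose j₁ hj₁I hj₁ using hr₁
  choose j₂ hj₂I hj₂ using hr₂
  obtain ⟨adj₁', hpw₁, vlin₁, wlin₁⟩ := vw_facts I MM v₁ w₁ hv₁ hw₁ adj₁ hwv₁ hvw₁
  obtain ⟨adj₂', hpw₂, vlin₂, wlin₂⟩ := vw_facts I MM v₂ w₂ hv₂ hw₂ adj₂ hwv₂ hvw₂
  have hjmul₁ : ∀ a b : A, j₁ (a * b) = j₁ a * b := by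
    intro a b
    apply MM.ι_inj
    rw [← hj₁ (a * b), MM.ι_mul, MM.ι_mul, ← mul_assoc, hj₁ a]
  have hjmul₂ : ∀ a b : A, j₂ (a * b) = j₂ a * b := by
    intro a b
    apply MM.ι_inj
    rw [← hj₂ (a * b), MM.ι_mul, MM.ι_mul, ← mul_assoc, hj₂ a]
  have hmem1 : ∀ a : A, v₁ (j₁ a) ∈ I := fun a => hv₁ _ (hj₁I a)
  have hmem2 : ∀ a : A, v₂ (j₂ a) ∈ I := fun a => hv₂ _ (hj₂I a)
  have hL : ∀ a b : A, w₂ (v₁ (j₁ (a * b))) = w₂ (v₁ (j₁ a)) * b := by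
    intro a b
    rw [hjmul₁ a b, vlin₁ _ (hj₁I a) b, wlin₂ _ (hmem1 a) b]
  have hL' : ∀ a b : A, w₁ (v₂ (j₂ (a * b))) = w₁ (v₂ (j₂ a)) * b := by
    intro a b
    rw [hjmul₂ a b, vlin₂ _ (hj₂I a) b, wlin₁ _ (hmem2 a) b]
  have claim : ∀ c b : A, star (w₁ (v₂ (j₂ c))) * b = star c * w₂ (v₁ (j₁ b)) := by
    intro c b
    apply MM.ι_inj
    calc MM.ι (star (w₁ (v₂ (j₂ c))) * b)
        = star (MM.ι (w₁ (v₂ (j₂ c)))) * MM.ι b := by rw [MM.ι_mul, MM.ι_star]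
      _ = star (p₁ * MM.ι (w₁ (v₂ (j₂ c)))) * MM.ι b := by
          conv_lhs => rw [← hpw₁ _ (hmem2 c)]
      _ = star (MM.ι (w₁ (v₂ (j₂ c)))) * (p₁ * MM.ι b) := by rw [star_mul, hs₁, mul_assoc]
      _ = MM.ι (star (w₁ (v₂ (j₂ c))) * j₁ b) := by rw [hj₁ b, ← MM.ι_star, ← MM.ι_mul]
      _ = MM.ι (star (v₂ (j₂ c)) * v₁ (j₁ b)) := by rw [adj₁' _ (hmem2 c) _ (hj₁I b)]
      _ = MM.ι (star (j₂ c) * w₂ (v₁ (j₁ b))) := by rw [adj₂ _ (hj₂I c) _ (hmem1 b)]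
      _ = star (p₂ * MM.ι c) * MM.ι (w₂ (v₁ (j₁ b))) := by rw [MM.ι_mul, MM.ι_star, hj₂ c]
      _ = star (MM.ι c) * (p₂ * MM.ι (w₂ (v₁ (j₁ b)))) := by rw [star_mul, hs₂, mul_assoc]
      _ = MM.ι (star c * w₂ (v₁ (j₁ b))) := by
          rw [hpw₂ _ (hmem1 b), ← MM.ι_star, ← MM.ι_mul]
  have hR : ∀ a b : A, star (w₁ (v₂ (j₂ (star (a * b))))) = a * star (w₁ (v₂ (j₂ (star b)))) := by
    intro a b
    rw [star_mul, hL' (star b) (star a), star_mul, star_star]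
  have hcomp : ∀ a b : A, MM.ι a * MM.ι (w₂ (v₁ (j₁ b)))
      = MM.ι (star (w₁ (v₂ (j₂ (star a))))) * MM.ι b := by
    intro a b
    rw [← MM.ι_mul, ← MM.ι_mul]
    congr 1
    have h := claim (star a) b
    rw [star_star] at h
    exact h.symm
  obtain ⟨V, hVl, hVr⟩ := MM.represents (fun a => w₂ (v₁ (j₁ a)))
    (fun a => star (w₁ (v₂ (j₂ (star a))))) hL hR hcomp
  have hVl' : ∀ a : A, V * MM.ι a = MM.ι (w₂ (v₁ (j₁ a))) := hVl
  have hVr' : ∀ a : A, MM.ι a * V = MM.ι (star (w₁ (v₂ (j₂ (star a))))) := hVr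
  have hVstar : ∀ a : A, star V * MM.ι a = MM.ι (w₁ (v₂ (j₂ a))) := by
    intro a
    have h := hVr' (star a)
    rw [star_star] at h
    have h2 : star (MM.ι (star a) * V) = star V * MM.ι a := by
      rw [star_mul, ← MM.ι_star, star_star]
    rw [← h2, h, MM.ι_star, star_star]
  have hVV : star V * V = p₁ := by
    have hz : ∀ a : A, (star V * V - p₁) * MM.ι a = 0 := by
      intro a
      rw [sub_mul, mul_assoc, hVl' a, hVstar _]
      have e1 : j₂ (w₂ (v₁ (j₁ a))) = w₂ (v₁ (j₁ a)) := by
        apply MM.ι_inj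
        rw [← hj₂ _, hpw₂ _ (hmem1 a)]
      rw [e1, hvw₂ _ (hmem1 a), hwv₁ _ (hj₁I a), ← hj₁ a, ← mul_assoc, hq₁]
      exact sub_self _
    have h0 := MM.essential _ hz
    rwa [sub_eq_zero] at h0
  have hVV2 : V * star V = p₂ := by
    have hz : ∀ a : A, (V * star V - p₂) * MM.ι a = 0 := by
      intro a
      rw [sub_mul, mul_assoc, hVstar a, hVl' _]
      have e2 : j₁ (w₁ (v₂ (j₂ a))) = w₁ (v₂ (j₂ a)) := by
        apply MM.ι_inj
        rw [← hj₁ _, hpw₁ _ (hmem2 a)]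
      rw [e2, hvw₁ _ (hmem2 a), hwv₂ _ (hj₂I a), ← hj₂ a, ← mul_assoc, hq₂]
      exact sub_self _
    have h0 := MM.essential _ hz
    rwa [sub_eq_zero] at h0
  exact ⟨V, hVV, hVV2⟩

end

noncomputable section

/-- For a σ-unital C*-algebra `A` and a σ-unital closed two-sided
ideal `I`, the following are equivalent: (i) `I` is a direct summand of `A` as a right
Hilbert `A`-module (i.e. some projection `p ∈ M(A)` has `pA ≅ I`); (ii) there is a
projection `P_I ∈ M(A)` with `P_I · A ⊆ I` whose restriction to `I` is Murray–von
Neumann equivalent to the unit of `M(I)`.  Moreover any two projections satisfying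
(ii) are Murray–von Neumann equivalent in `M(A)`. -/
theorem summand_iff_PIProjection
    {A MA : Type} [NonUnitalCStarAlgebra A] [CStarAlgebra MA]
    (hA : SigmaUnitalAlg A)
    (I : TwoSidedIdeal A) (hI : IsClosed (I : Set A)) (hσ : SigmaUnitalIdeal I)
    (MM : MultAlgebraOf A MA) :
    ((∃ p : MA, IsProjection p ∧
        SetHIso {a : A | p * MM.ι a = MM.ι a} (I : Set A)) ↔
      (∃ p : MA, PIProjection MM I p)) ∧
    (∀ p₁ p₂ : MA, PIProjection MM I p₁ → PIProjection MM I p₂ → MvN p₁ p₂) := by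
  constructor
  · constructor
    · rintro ⟨p, hp, hiso⟩
      exact ⟨p, dir1 I hI MM hp hiso⟩
    · rintro ⟨p, hp⟩
      exact ⟨p, hp.1, dir2 I MM hp⟩
  · intro p₁ p₂ h₁ h₂
    exact my_mvn I MM h₁ h₂

end
end
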